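/- Let N, K ∈ ℕ be positive, ρ > 0, S ∈ ℂ^{N×N} Hermitian positive semidefinite, and R_1, …, R_K ∈ ℂ^{N×N} Hermitian positive semidefinite. Then there exists a unique vector δ = (δ_1, …, δ_K) ∈ ℝ^K with δ_k ≥ 0 for all k satisfying the system of implicit equations δ_k = (1/N) tr( R_k T(δ) ) for k = 1, …, K, where T(δ) = ( (1/N) Σ_{j=1}^K R_j/(1 + δ_j) + S + ρ I_N )^{−1}. -/

import Mathlib

set_option linter.unusedSectionVars false

open Matrix
open scoped ComplexOrder

variable {n : Type*} [Fintype n] [DecidableEq n]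

open scoped MatrixOrder in
noncomputable def Matrix.PosSemidef.sqrt {A : Matrix n n ℂ} (_hA : A.PosSemidef) : Matrix n n ℂ :=
  CFC.sqrt A

open scoped MatrixOrder in
lemma Matrix.PosSemidef.sqrt_mul_self {A : Matrix n n ℂ} (hA : A.PosSemidef) :
    hA.sqrt * hA.sqrt = A := CFC.sqrt_mul_sqrt_self A hA.nonneg

open scoped MatrixOrder in
lemma Matrix.PosSemidef.posSemidef_sqrt {A : Matrix n n ℂ} (hA : A.PosSemidef) :
    hA.sqrt.PosSemidef := (CFC.sqrt_nonneg A).posSemidef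

lemma Matrix.IsHermitian.star_mul_self_mul_eq_diagonal {A : Matrix n n ℂ} (hA : A.IsHermitian) :
    star (hA.eigenvectorUnitary : Matrix n n ℂ) * A * (hA.eigenvectorUnitary : Matrix n n ℂ)
      = diagonal (RCLike.ofReal ∘ hA.eigenvalues) := by
  have h := hA.spectral_theorem
  rw [Unitary.conjStarAlgAut_apply] at h
  calc _ = star (hA.eigenvectorUnitary : Matrix n n ℂ) * ((hA.eigenvectorUnitary : Matrix n n ℂ) *
        diagonal (RCLike.ofReal ∘ hA.eigenvalues) * star (hA.eigenvectorUnitary : Matrix n n ℂ)) *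
        (hA.eigenvectorUnitary : Matrix n n ℂ) := by rw [← h]
    _ = _ := by
      simp only [← mul_assoc, Unitary.coe_star_mul_self, one_mul]
      simp only [mul_assoc, Unitary.coe_star_mul_self, mul_one]

lemma smul_posSemidef {c : ℝ} (hc : 0 ≤ c) {A : Matrix n n ℂ} (hA : A.PosSemidef) :
    ((c : ℂ) • A).PosSemidef := by
  refine Matrix.PosSemidef.of_dotProduct_mulVec_nonneg ?_ fun x => ?_
  · unfold Matrix.IsHermitian
    rw [conjTranspose_smul, hA.1.eq]
    norm_num [Complex.star_def, Complex.conj_ofReal]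
  · rw [smul_mulVec, dotProduct_smul]
    exact mul_nonneg (by exact_mod_cast hc) (hA.dotProduct_mulVec_nonneg x)

lemma smul_posDef {c : ℝ} (hc : 0 < c) {A : Matrix n n ℂ} (hA : A.PosDef) :
    ((c : ℂ) • A).PosDef := by
  refine Matrix.PosDef.of_dotProduct_mulVec_pos (smul_posSemidef hc.le hA.posSemidef).1 fun ⦃x⦄ hx => ?_
  rw [smul_mulVec, dotProduct_smul]
  exact mul_pos (by exact_mod_cast hc) (hA.dotProduct_mulVec_pos hx)

lemma trace_nonneg_of_posSemidef {A : Matrix n n ℂ} (hA : A.PosSemidef) :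
    0 ≤ A.trace := by
  rw [Matrix.trace]
  refine Finset.sum_nonneg fun i _ => ?_
  have := hA.dotProduct_mulVec_nonneg (Pi.single i 1)
  simpa [dotProduct, Pi.single_apply, Matrix.mulVec, Finset.sum_ite_eq] using this

open scoped MatrixOrder in
lemma trace_mul_posSemidef_nonneg {A B : Matrix n n ℂ} (hA : A.PosSemidef) (hB : B.PosSemidef) :
    0 ≤ (A * B).trace := by
  obtain ⟨C, rfl⟩ := CStarAlgebra.nonneg_iff_eq_star_mul_self.mp hB.nonneg
  rw [← Matrix.mul_assoc, Matrix.trace_mul_cycle]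
  exact trace_nonneg_of_posSemidef (hA.mul_mul_conjTranspose_same C)

lemma trace_conjTranspose_mul_self_re (X : Matrix n n ℂ) :
    ((Xᴴ * X).trace).re = ∑ i, ∑ j, Complex.normSq (X j i) := by
  simp only [Matrix.trace, Matrix.diag_apply, Matrix.mul_apply, Matrix.conjTranspose_apply,
    Complex.re_sum]
  refine Finset.sum_congr rfl fun i _ => Finset.sum_congr rfl fun j _ => ?_
  simp [Complex.star_def, Complex.normSq_apply, mul_comm]

lemma trace_mul_posDef_pos {A B : Matrix n n ℂ} (hA : A.PosSemidef) (hA0 : A ≠ 0)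
    (hB : B.PosDef) : 0 < ((A * B).trace).re := by
  set E := hA.sqrt with hE
  set D := hB.posSemidef.sqrt with hD
  have hEE : E * E = A := hA.sqrt_mul_self
  have hDD : D * D = B := hB.posSemidef.sqrt_mul_self
  have hDdet : IsUnit D.det := by
    have : D.det * D.det = B.det := by rw [← Matrix.det_mul, hDD]
    have hBdet : B.det ≠ 0 := ne_of_gt hB.det_pos
    exact isUnit_iff_ne_zero.mpr (fun h => hBdet (by rw [← this, h, mul_zero]))
  have key : (A * B).trace = ((E * D)ᴴ * (E * D)).trace := by
    rw [Matrix.conjTranspose_mul, hB.posSemidef.posSemidef_sqrt.1.eq, hA.posSemidef_sqrt.1.eq]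
    rw [← hE, ← hD]
    rw [show D * E * (E * D) = D * (E * E) * D by noncomm_ring, ← Matrix.trace_mul_cycle,
      show E * E * D * D = E * E * (D * D) by noncomm_ring, hEE, hDD]
  rw [key, trace_conjTranspose_mul_self_re]
  have hnonneg : ∀ i ∈ Finset.univ (α := n), 0 ≤ ∑ j, Complex.normSq ((E * D) j i) :=
    fun i _ => Finset.sum_nonneg fun j _ => Complex.normSq_nonneg _
  rcases (Finset.sum_nonneg hnonneg).lt_or_eq with h | h
  · exact h
  · exfalso
    apply hA0
    have hED : E * D = 0 := by
      ext j i
      have h1 := (Finset.sum_eq_zero_iff_of_nonneg hnonneg).mp h.symm i (Finset.mem_univ i)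
      have h2 := (Finset.sum_eq_zero_iff_of_nonneg
        (fun j _ => Complex.normSq_nonneg ((E * D) j i))).mp h1 j (Finset.mem_univ j)
      simpa using Complex.normSq_eq_zero.mp h2
    have hE0 : E = 0 := by
      calc E = E * (D * D⁻¹) := by rw [Matrix.mul_nonsing_inv D hDdet, mul_one]
      _ = (E * D) * D⁻¹ := by rw [mul_assoc]
      _ = 0 := by rw [hED, zero_mul]
    rw [← hEE, hE0, mul_zero]

lemma conj_posDef' {M X : Matrix n n ℂ} (hM : IsUnit M.det)
    (hX : X.PosDef) : (M * X * Mᴴ).PosDef := by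
  refine Matrix.PosDef.of_dotProduct_mulVec_pos (Matrix.isHermitian_mul_mul_conjTranspose M hX.1) fun ⦃x⦄ hx => ?_
  have hinj : Function.Injective (Mᴴ).mulVec :=
    Matrix.mulVec_injective_iff_isUnit.mpr ((Matrix.isUnit_iff_isUnit_det _).mpr
      (by rwa [Matrix.det_conjTranspose, isUnit_star]))
  have hx' : Mᴴ *ᵥ x ≠ 0 := by
    intro h
    exact hx (hinj (by simpa using h))
  have := hX.dotProduct_mulVec_pos hx'
  rw [star_mulVec, conjTranspose_conjTranspose, ← Matrix.dotProduct_mulVec,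
    Matrix.mulVec_mulVec, Matrix.mulVec_mulVec] at this
  exact this

lemma conj_posDef {M X : Matrix n n ℂ} (hM : IsUnit M.det) (hMh : M.IsHermitian)
    (hX : X.PosDef) : (M * X * M).PosDef := by
  have := conj_posDef' hM hX
  rwa [hMh.eq] at this

section spectral
variable {P : Matrix n n ℂ}

lemma eig_ge_one (hP : P.PosDef) (h1 : (P - 1).PosSemidef) (i : n) :
    1 ≤ hP.1.eigenvalues i := by
  set U : Matrix n n ℂ := (hP.1.eigenvectorUnitary : Matrix n n ℂ) with hU
  have hUU : star U * U = 1 := Unitary.coe_star_mul_self _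
  have hdiag : star U * (P - 1) * U = diagonal (fun i => (hP.1.eigenvalues i : ℂ) - 1) := by
    rw [Matrix.mul_sub, Matrix.sub_mul, hP.1.star_mul_self_mul_eq_diagonal, Matrix.mul_one, hUU,
      ← Matrix.diagonal_one, Matrix.diagonal_sub]
    rfl
  have hpsd : (star U * (P - 1) * U).PosSemidef := by
    have := h1.conjTranspose_mul_mul_same U
    rwa [← Matrix.star_eq_conjTranspose] at this
  rw [hdiag] at hpsd
  have := Matrix.posSemidef_diagonal_iff.mp hpsd i
  have h2 : (0:ℂ) ≤ ((hP.1.eigenvalues i - 1 : ℝ) : ℂ) := by push_cast; exact this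
  rw [Complex.zero_le_real] at h2
  linarith

lemma eig_gt_one (hP : P.PosDef) (h1 : (P - 1).PosDef) (i : n) :
    1 < hP.1.eigenvalues i := by
  set U : Matrix n n ℂ := (hP.1.eigenvectorUnitary : Matrix n n ℂ) with hU
  have hUU : star U * U = 1 := Unitary.coe_star_mul_self _
  have hUdet : IsUnit (star U).det := by
    have : (star U).det * U.det = 1 := by rw [← Matrix.det_mul, hUU, Matrix.det_one]
    exact IsUnit.of_mul_eq_one _ this
  have hdiag : star U * (P - 1) * U = diagonal (fun i => (hP.1.eigenvalues i : ℂ) - 1) := by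
    rw [Matrix.mul_sub, Matrix.sub_mul, hP.1.star_mul_self_mul_eq_diagonal, Matrix.mul_one, hUU,
      ← Matrix.diagonal_one, Matrix.diagonal_sub]
    rfl
  have hpd : (star U * (P - 1) * U).PosDef := by
    have := conj_posDef' hUdet h1
    rwa [← Matrix.star_eq_conjTranspose, star_star] at this
  rw [hdiag] at hpd
  have := Matrix.posDef_diagonal_iff.mp hpd i
  have h2 : (0:ℂ) < ((hP.1.eigenvalues i - 1 : ℝ) : ℂ) := by push_cast; exact this
  rw [Complex.zero_lt_real] at h2
  linarith

lemma inv_spectral (hP : P.PosDef) :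
    P⁻¹ = (hP.1.eigenvectorUnitary : Matrix n n ℂ) *
      diagonal (fun i => ((hP.1.eigenvalues i : ℂ))⁻¹) *
      (star hP.1.eigenvectorUnitary : Matrix n n ℂ) := by
  set U : Matrix n n ℂ := (hP.1.eigenvectorUnitary : Matrix n n ℂ) with hU
  have hUU : star U * U = 1 := Unitary.coe_star_mul_self _
  have hUsU : U * star U = 1 := Unitary.coe_mul_star_self _
  have hUinv : U⁻¹ = star U := Matrix.inv_eq_left_inv hUU
  have hsUinv : (star U)⁻¹ = U := Matrix.inv_eq_left_inv hUsU
  conv_lhs => rw [hP.1.spectral_theorem, Unitary.conjStarAlgAut_apply]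
  have hdinv : (diagonal (RCLike.ofReal ∘ hP.1.eigenvalues) : Matrix n n ℂ)⁻¹
      = diagonal (fun i => ((hP.1.eigenvalues i : ℂ))⁻¹) := by
    refine Matrix.inv_eq_left_inv ?_
    rw [Matrix.diagonal_mul_diagonal]
    rw [show (fun i => ((hP.1.eigenvalues i : ℂ))⁻¹ * (RCLike.ofReal ∘ hP.1.eigenvalues) i)
        = fun _ => (1:ℂ) from funext fun i => inv_mul_cancel₀ (by
          exact_mod_cast ne_of_gt (hP.eigenvalues_pos i))]
    exact Matrix.diagonal_one
  rw [Matrix.mul_inv_rev, Matrix.mul_inv_rev, hUinv, hsUinv, hdinv]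
  noncomm_ring

end spectral

section onesub
variable {P : Matrix n n ℂ}

lemma key_decomp (hP : P.PosDef) :
    1 - P⁻¹ = (hP.1.eigenvectorUnitary : Matrix n n ℂ) *
      diagonal (fun i => 1 - ((hP.1.eigenvalues i : ℂ))⁻¹) *
      (star hP.1.eigenvectorUnitary : Matrix n n ℂ) := by
  set U : Matrix n n ℂ := (hP.1.eigenvectorUnitary : Matrix n n ℂ) with hU
  have hUsU : U * star U = 1 := Unitary.coe_mul_star_self _
  rw [inv_spectral hP, ← hU]
  rw [show (diagonal (fun i => 1 - ((hP.1.eigenvalues i : ℂ))⁻¹) : Matrix n n ℂ)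
      = 1 - diagonal (fun i => ((hP.1.eigenvalues i : ℂ))⁻¹) by
    rw [← Matrix.diagonal_one, Matrix.diagonal_sub]]
  rw [Matrix.mul_sub, Matrix.sub_mul, Matrix.mul_one, hUsU]

lemma one_sub_inv_posSemidef (hP : P.PosDef) (h1 : (P - 1).PosSemidef) :
    (1 - P⁻¹).PosSemidef := by
  rw [key_decomp hP, Matrix.star_eq_conjTranspose]
  refine Matrix.PosSemidef.mul_mul_conjTranspose_same ?_ _
  refine Matrix.posSemidef_diagonal_iff.mpr fun i => ?_
  have hge := eig_ge_one hP h1 i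
  have : (0:ℝ) ≤ 1 - (hP.1.eigenvalues i)⁻¹ := by
    have h0 : 0 < hP.1.eigenvalues i := hP.eigenvalues_pos i
    have := inv_le_one_of_one_le₀ hge
    linarith
  calc (0:ℂ) ≤ ((1 - (hP.1.eigenvalues i)⁻¹ : ℝ) : ℂ) := by
        rw [Complex.zero_le_real]; exact this
    _ = 1 - ((hP.1.eigenvalues i : ℂ))⁻¹ := by push_cast; ring

lemma one_sub_inv_posDef (hP : P.PosDef) (h1 : (P - 1).PosDef) :
    (1 - P⁻¹).PosDef := by
  rw [key_decomp hP]
  have hUdet : IsUnit ((hP.1.eigenvectorUnitary : Matrix n n ℂ)).det := by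
    have h : (hP.1.eigenvectorUnitary : Matrix n n ℂ) *
        (star hP.1.eigenvectorUnitary : Matrix n n ℂ) = 1 := Unitary.coe_mul_star_self _
    have : ((hP.1.eigenvectorUnitary : Matrix n n ℂ)).det *
        ((star hP.1.eigenvectorUnitary : Matrix n n ℂ)).det = 1 := by
      rw [← Matrix.det_mul, h, Matrix.det_one]
    exact IsUnit.of_mul_eq_one _ this
  have hdiag : (diagonal (fun i => 1 - ((hP.1.eigenvalues i : ℂ))⁻¹) : Matrix n n ℂ).PosDef := by
    refine Matrix.PosDef.diagonal fun i => ?_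
    have hgt := eig_gt_one hP h1 i
    have h0 : 0 < hP.1.eigenvalues i := hP.eigenvalues_pos i
    have : (0:ℝ) < 1 - (hP.1.eigenvalues i)⁻¹ := by
      have : (hP.1.eigenvalues i)⁻¹ < 1 := inv_lt_one_of_one_lt₀ hgt
      linarith
    calc (0:ℂ) < ((1 - (hP.1.eigenvalues i)⁻¹ : ℝ) : ℂ) := by
          rw [Complex.zero_lt_real]; exact this
      _ = 1 - ((hP.1.eigenvalues i : ℂ))⁻¹ := by push_cast; ring
  have := conj_posDef' hUdet hdiag
  rwa [← Matrix.star_eq_conjTranspose] at this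

end onesub

section antitone
variable {A B : Matrix n n ℂ}

lemma sqrt_det_isUnit (hA : A.PosDef) : IsUnit hA.posSemidef.sqrt.det := by
  have h : hA.posSemidef.sqrt.det * hA.posSemidef.sqrt.det = A.det := by
    rw [← Matrix.det_mul, hA.posSemidef.sqrt_mul_self]
  have hAdet : A.det ≠ 0 := ne_of_gt hA.det_pos
  exact isUnit_iff_ne_zero.mpr fun h0 => hAdet (by rw [← h, h0, mul_zero])

lemma inv_sub_inv_posSemidef (hA : A.PosDef) (hB : B.PosDef)
    (hBA : (B - A).PosSemidef) : (A⁻¹ - B⁻¹).PosSemidef := by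
  set E := hA.posSemidef.sqrt with hEdef
  have hEh : E.IsHermitian := hA.posSemidef.posSemidef_sqrt.1
  have hEE : E * E = A := hA.posSemidef.sqrt_mul_self
  have hEdet : IsUnit E.det := sqrt_det_isUnit hA
  have hEiE : E⁻¹ * E = 1 := Matrix.nonsing_inv_mul E hEdet
  have hEEi : E * E⁻¹ = 1 := Matrix.mul_nonsing_inv E hEdet
  have hEih : (E⁻¹).IsHermitian := hEh.inv
  have hAinv : E⁻¹ * A * E⁻¹ = 1 := by
    rw [← hEE, show E⁻¹ * (E * E) * E⁻¹ = (E⁻¹ * E) * (E * E⁻¹) by noncomm_ring,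
      hEiE, hEEi, one_mul]
  set P := E⁻¹ * B * E⁻¹ with hPdef
  have hPpd : P.PosDef := by
    have hEidet : IsUnit (E⁻¹).det := by
      rw [Matrix.det_nonsing_inv, Ring.inverse_eq_inv]
      exact isUnit_iff_ne_zero.mpr (inv_ne_zero (isUnit_iff_ne_zero.mp hEdet))
    exact conj_posDef hEidet hEih hB
  have hP1 : (P - 1).PosSemidef := by
    have hcalc : P - 1 = E⁻¹ * (B - A) * E⁻¹ := by
      rw [Matrix.mul_sub, Matrix.sub_mul, hAinv, hPdef]
    rw [hcalc]
    have := hBA.mul_mul_conjTranspose_same E⁻¹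
    rwa [hEih.eq] at this
  have hPinv : P⁻¹ = E * B⁻¹ * E := by
    rw [hPdef, Matrix.mul_inv_rev, Matrix.mul_inv_rev,
      Matrix.nonsing_inv_nonsing_inv E hEdet]
    noncomm_ring
  have hkey : A⁻¹ - B⁻¹ = E⁻¹ * (1 - P⁻¹) * E⁻¹ := by
    rw [Matrix.mul_sub, Matrix.sub_mul, Matrix.mul_one, hPinv,
      show E⁻¹ * (E * B⁻¹ * E) * E⁻¹ = (E⁻¹ * E) * B⁻¹ * (E * E⁻¹) by noncomm_ring,
      hEiE, hEEi, one_mul, Matrix.mul_one,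
      show E⁻¹ * E⁻¹ = (E * E)⁻¹ by rw [Matrix.mul_inv_rev], hEE]
  rw [hkey]
  have h2 := one_sub_inv_posSemidef hPpd hP1
  have := h2.mul_mul_conjTranspose_same E⁻¹
  rwa [hEih.eq] at this

lemma inv_sub_inv_posDef (hA : A.PosDef) (hB : B.PosDef)
    (hBA : (B - A).PosDef) : (A⁻¹ - B⁻¹).PosDef := by
  set E := hA.posSemidef.sqrt with hEdef
  have hEh : E.IsHermitian := hA.posSemidef.posSemidef_sqrt.1
  have hEE : E * E = A := hA.posSemidef.sqrt_mul_self
  have hEdet : IsUnit E.det := sqrt_det_isUnit hA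
  have hEiE : E⁻¹ * E = 1 := Matrix.nonsing_inv_mul E hEdet
  have hEEi : E * E⁻¹ = 1 := Matrix.mul_nonsing_inv E hEdet
  have hEih : (E⁻¹).IsHermitian := hEh.inv
  have hEidet : IsUnit (E⁻¹).det := by
    rw [Matrix.det_nonsing_inv, Ring.inverse_eq_inv]
    exact isUnit_iff_ne_zero.mpr (inv_ne_zero (isUnit_iff_ne_zero.mp hEdet))
  have hAinv : E⁻¹ * A * E⁻¹ = 1 := by
    rw [← hEE, show E⁻¹ * (E * E) * E⁻¹ = (E⁻¹ * E) * (E * E⁻¹) by noncomm_ring,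
      hEiE, hEEi, one_mul]
  set P := E⁻¹ * B * E⁻¹ with hPdef
  have hPpd : P.PosDef := conj_posDef hEidet hEih hB
  have hP1 : (P - 1).PosDef := by
    have hcalc : P - 1 = E⁻¹ * (B - A) * E⁻¹ := by
      rw [Matrix.mul_sub, Matrix.sub_mul, hAinv, hPdef]
    rw [hcalc]
    exact conj_posDef hEidet hEih hBA
  have hPinv : P⁻¹ = E * B⁻¹ * E := by
    rw [hPdef, Matrix.mul_inv_rev, Matrix.mul_inv_rev,
      Matrix.nonsing_inv_nonsing_inv E hEdet]
    noncomm_ring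
  have hkey : A⁻¹ - B⁻¹ = E⁻¹ * (1 - P⁻¹) * E⁻¹ := by
    rw [Matrix.mul_sub, Matrix.sub_mul, Matrix.mul_one, hPinv,
      show E⁻¹ * (E * B⁻¹ * E) * E⁻¹ = (E⁻¹ * E) * B⁻¹ * (E * E⁻¹) by noncomm_ring,
      hEiE, hEEi, one_mul, Matrix.mul_one,
      show E⁻¹ * E⁻¹ = (E * E)⁻¹ by rw [Matrix.mul_inv_rev], hEE]
  rw [hkey]
  exact conj_posDef hEidet hEih (one_sub_inv_posDef hPpd hP1)

end antitone

lemma posSemidef_sum {ι : Type*} (s : Finset ι) (f : ι → Matrix n n ℂ)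
    (h : ∀ i ∈ s, (f i).PosSemidef) : (∑ i ∈ s, f i).PosSemidef :=
  Finset.sum_induction f Matrix.PosSemidef (fun _ _ ha hb => ha.add hb)
    Matrix.PosSemidef.zero h

lemma smul_matrix_inv {c : ℂ} (hc : c ≠ 0) {X : Matrix n n ℂ} (hX : IsUnit X.det) :
    (c • X)⁻¹ = c⁻¹ • X⁻¹ := by
  refine Matrix.inv_eq_left_inv ?_
  rw [smul_mul_assoc, mul_smul_comm, Matrix.nonsing_inv_mul X hX, smul_smul,
    inv_mul_cancel₀ hc, one_smul]

section main

variable {N K : ℕ}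

/-- The matrix `A(δ)` whose inverse is `T(δ)`. -/
noncomputable def Amat (ρ : ℝ) (S : Matrix (Fin N) (Fin N) ℂ)
    (R : Fin K → Matrix (Fin N) (Fin N) ℂ) (δ : Fin K → ℝ) : Matrix (Fin N) (Fin N) ℂ :=
  (1 / (N : ℂ)) • (∑ j : Fin K, ((1 : ℂ) + (δ j : ℂ))⁻¹ • R j) + S
    + (ρ : ℂ) • (1 : Matrix (Fin N) (Fin N) ℂ)

variable {ρ : ℝ} {S : Matrix (Fin N) (Fin N) ℂ} {R : Fin K → Matrix (Fin N) (Fin N) ℂ}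

lemma coeff_cast {x : ℝ} : ((1 : ℂ) + (x : ℂ))⁻¹ = (((1 + x)⁻¹ : ℝ) : ℂ) := by
  push_cast
  ring

lemma sum_part_psd' (hR : ∀ k, (R k).PosSemidef) {c : Fin K → ℝ} (hc : ∀ j, 0 ≤ c j) :
    ((1 / (N : ℂ)) • (∑ j : Fin K, ((c j : ℝ) : ℂ) • R j)).PosSemidef := by
  rw [show (1 / (N : ℂ)) = (((1 / (N:ℝ)) : ℝ) : ℂ) by push_cast; ring]
  refine smul_posSemidef (by positivity) ?_
  exact posSemidef_sum _ _ fun j _ => smul_posSemidef (hc j) (hR j)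

lemma sum_part_psd (hR : ∀ k, (R k).PosSemidef) {δ : Fin K → ℝ} (hδ : ∀ k, 0 ≤ δ k) :
    ((1 / (N : ℂ)) • (∑ j : Fin K, ((1 : ℂ) + (δ j : ℂ))⁻¹ • R j)).PosSemidef := by
  rw [show (∑ j : Fin K, ((1 : ℂ) + (δ j : ℂ))⁻¹ • R j)
      = ∑ j : Fin K, ((((1 + δ j)⁻¹ : ℝ)) : ℂ) • R j from
    Finset.sum_congr rfl fun j _ => by rw [coeff_cast]]
  refine sum_part_psd' hR fun j => ?_
  have := hδ j
  positivity

lemma Amat_posDef (hρ : 0 < ρ) (hS : S.PosSemidef) (hR : ∀ k, (R k).PosSemidef)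
    {δ : Fin K → ℝ} (hδ : ∀ k, 0 ≤ δ k) : (Amat ρ S R δ).PosDef := by
  unfold Amat
  exact Matrix.PosDef.posSemidef_add ((sum_part_psd hR hδ).add hS)
    (smul_posDef hρ Matrix.PosDef.one)

lemma Amat_sub_smul_one_psd (hS : S.PosSemidef) (hR : ∀ k, (R k).PosSemidef)
    {δ : Fin K → ℝ} (hδ : ∀ k, 0 ≤ δ k) :
    (Amat ρ S R δ - (ρ : ℂ) • (1 : Matrix (Fin N) (Fin N) ℂ)).PosSemidef := by
  unfold Amat
  rw [add_sub_cancel_right]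
  exact (sum_part_psd hR hδ).add hS

lemma Amat_mono (hR : ∀ k, (R k).PosSemidef) {δ δ' : Fin K → ℝ} (hδ : ∀ k, 0 ≤ δ k)
    (hle : ∀ k, δ k ≤ δ' k) : (Amat ρ S R δ - Amat ρ S R δ').PosSemidef := by
  have hkey : Amat ρ S R δ - Amat ρ S R δ'
      = (1 / (N : ℂ)) • ∑ j : Fin K,
        ((((1 + δ j)⁻¹ - (1 + δ' j)⁻¹ : ℝ)) : ℂ) • R j := by
    have hXY : ∀ X Y : Matrix (Fin N) (Fin N) ℂ,
        (X + S + (ρ:ℂ) • 1) - (Y + S + (ρ:ℂ) • 1) = X - Y := fun X Y => by abel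
    unfold Amat
    rw [hXY, ← smul_sub, ← Finset.sum_sub_distrib]
    congr 1
    refine Finset.sum_congr rfl fun j _ => ?_
    rw [← sub_smul, coeff_cast, coeff_cast]
    push_cast
    ring_nf
  rw [hkey]
  refine sum_part_psd' hR fun j => ?_
  have h1 : (0:ℝ) < 1 + δ j := by have := hδ j; linarith
  have h2 : (0:ℝ) < 1 + δ' j := by have := (hδ j).trans (hle j); linarith
  have h3 : (1 + δ' j)⁻¹ ≤ (1 + δ j)⁻¹ := by
    rw [← one_div, ← one_div]
    exact one_div_le_one_div_of_le h1 (by linarith [hle j])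
  linarith

lemma Amat_scale (hρ : 0 < ρ) (hS : S.PosSemidef) (hR : ∀ k, (R k).PosSemidef)
    {δ : Fin K → ℝ} (hδ : ∀ k, 0 ≤ δ k) {t : ℝ} (ht : 1 < t) :
    (Amat ρ S R (fun j => t * δ j) - (((1/t : ℝ) : ℂ)) • Amat ρ S R δ).PosDef := by
  have ht0 : (0:ℝ) < t := lt_trans one_pos ht
  set s : ℝ := 1/t with hs
  have hs0 : 0 < s := by positivity
  have hs1 : s < 1 := by rw [hs, div_lt_one ht0]; exact ht
  have hcomb : ∀ a b : Fin K → ℝ,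
      (∑ j : Fin K, ((a j : ℝ) : ℂ) • R j) - ((s:ℝ):ℂ) • ∑ j : Fin K, ((b j : ℝ) : ℂ) • R j
        = ∑ j : Fin K, (((a j - s * b j : ℝ)) : ℂ) • R j := by
    intro a b
    rw [Finset.smul_sum, ← Finset.sum_sub_distrib]
    refine Finset.sum_congr rfl fun j _ => ?_
    rw [smul_smul, ← sub_smul]
    push_cast
    ring_nf
  have hkey : Amat ρ S R (fun j => t * δ j) - ((s : ℝ) : ℂ) • Amat ρ S R δ
      = (1 / (N : ℂ)) • ∑ j : Fin K,
          ((((1 + t * δ j)⁻¹ - s * (1 + δ j)⁻¹ : ℝ)) : ℂ) • R j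
        + (((1 - s : ℝ)) : ℂ) • S
        + ((((1 - s) * ρ : ℝ)) : ℂ) • (1 : Matrix (Fin N) (Fin N) ℂ) := by
    unfold Amat
    rw [show (∑ j : Fin K, ((1 : ℂ) + ((t * δ j : ℝ) : ℂ))⁻¹ • R j)
        = ∑ j : Fin K, ((((1 + t * δ j)⁻¹ : ℝ)) : ℂ) • R j from
      Finset.sum_congr rfl fun j _ => by rw [coeff_cast]]
    rw [show (∑ j : Fin K, ((1 : ℂ) + ((δ j : ℝ) : ℂ))⁻¹ • R j)
        = ∑ j : Fin K, ((((1 + δ j)⁻¹ : ℝ)) : ℂ) • R j from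
      Finset.sum_congr rfl fun j _ => by rw [coeff_cast]]
    rw [← hcomb (fun j => (1 + t * δ j)⁻¹) (fun j => (1 + δ j)⁻¹)]
    push_cast
    module
  rw [hkey]
  have hpart1 : ((1 / (N : ℂ)) • ∑ j : Fin K,
      ((((1 + t * δ j)⁻¹ - s * (1 + δ j)⁻¹ : ℝ)) : ℂ) • R j).PosSemidef := by
    refine sum_part_psd' hR fun j => ?_
    have hx := hδ j
    have h1 : (0:ℝ) < 1 + t * δ j := by nlinarith
    have h2 : (0:ℝ) < t * (1 + δ j) := by nlinarith
    have h3 : (t * (1 + δ j))⁻¹ ≤ (1 + t * δ j)⁻¹ := by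
      rw [← one_div, ← one_div]
      exact one_div_le_one_div_of_le h1 (by nlinarith)
    have h4 : s * (1 + δ j)⁻¹ = (t * (1 + δ j))⁻¹ := by
      rw [mul_inv, hs]
      ring
    linarith
  have hpart2 : ((((1 - s : ℝ)) : ℂ) • S).PosSemidef :=
    smul_posSemidef (by linarith) hS
  have hpart3 : (((((1 - s) * ρ : ℝ)) : ℂ) • (1 : Matrix (Fin N) (Fin N) ℂ)).PosDef :=
    smul_posDef (by nlinarith) Matrix.PosDef.one
  exact Matrix.PosDef.posSemidef_add (hpart1.add hpart2) hpart3

variable (ρ S R) in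
/-- The fixed-point map `F(δ)_k = (1/N) Re tr(R_k A(δ)⁻¹)`. -/
noncomputable def Fmap (δ : Fin K → ℝ) : Fin K → ℝ :=
  fun k => (1 / (N : ℝ)) * ((R k * (Amat ρ S R δ)⁻¹).trace).re

lemma re_nonneg_of_nonneg {z : ℂ} (h : 0 ≤ z) : 0 ≤ z.re := (Complex.le_def.mp h).1

lemma re_pos_of_pos {z : ℂ} (h : 0 < z) : 0 < z.re := (Complex.lt_def.mp h).1

lemma Fmap_nonneg (hρ : 0 < ρ) (hS : S.PosSemidef) (hR : ∀ k, (R k).PosSemidef)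
    {δ : Fin K → ℝ} (hδ : ∀ k, 0 ≤ δ k) (k : Fin K) : 0 ≤ Fmap ρ S R δ k := by
  have hA := Amat_posDef hρ hS hR hδ
  have h := trace_mul_posSemidef_nonneg (hR k) hA.inv.posSemidef
  exact mul_nonneg (by positivity) (re_nonneg_of_nonneg h)

lemma Fmap_zero {δ : Fin K → ℝ} {k : Fin K} (hk : R k = 0) : Fmap ρ S R δ k = 0 := by
  simp [Fmap, hk]

lemma Fmap_pos (hN : 0 < N) (hρ : 0 < ρ) (hS : S.PosSemidef) (hR : ∀ k, (R k).PosSemidef)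
    {δ : Fin K → ℝ} (hδ : ∀ k, 0 ≤ δ k) {k : Fin K} (hk : R k ≠ 0) :
    0 < Fmap ρ S R δ k := by
  have hA := Amat_posDef hρ hS hR hδ
  have h := trace_mul_posDef_pos (hR k) hk hA.inv
  have hN' : (0:ℝ) < 1 / (N:ℝ) := by positivity
  exact mul_pos hN' h

lemma Fmap_mono (hρ : 0 < ρ) (hS : S.PosSemidef) (hR : ∀ k, (R k).PosSemidef)
    {δ δ' : Fin K → ℝ} (hδ : ∀ k, 0 ≤ δ k) (hle : ∀ k, δ k ≤ δ' k) (k : Fin K) :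
    Fmap ρ S R δ k ≤ Fmap ρ S R δ' k := by
  have hδ' : ∀ k, 0 ≤ δ' k := fun k => (hδ k).trans (hle k)
  have hA := Amat_posDef hρ hS hR hδ
  have hA' := Amat_posDef hρ hS hR hδ'
  have hdiff := Amat_mono (ρ := ρ) (S := S) hR hδ hle
  have hinv := inv_sub_inv_posSemidef hA' hA hdiff
  have htr := re_nonneg_of_nonneg (trace_mul_posSemidef_nonneg (hR k) hinv)
  rw [Matrix.mul_sub, Matrix.trace_sub, Complex.sub_re] at htr
  have : ((R k * (Amat ρ S R δ)⁻¹).trace).re ≤ ((R k * (Amat ρ S R δ')⁻¹).trace).re := by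
    linarith
  exact mul_le_mul_of_nonneg_left this (by positivity)

lemma Fmap_bound (hρ : 0 < ρ) (hS : S.PosSemidef) (hR : ∀ k, (R k).PosSemidef)
    {δ : Fin K → ℝ} (hδ : ∀ k, 0 ≤ δ k) (k : Fin K) :
    Fmap ρ S R δ k ≤ (1 / (N:ℝ)) * ρ⁻¹ * ((R k).trace).re := by
  have hA := Amat_posDef hρ hS hR hδ
  have hone : (((ρ:ℝ):ℂ) • (1 : Matrix (Fin N) (Fin N) ℂ)).PosDef :=
    smul_posDef hρ Matrix.PosDef.one
  have hBA := Amat_sub_smul_one_psd (ρ := ρ) hS hR hδ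
  have hinv := inv_sub_inv_posSemidef hone hA hBA
  have hinv1 : (((ρ:ℝ):ℂ) • (1 : Matrix (Fin N) (Fin N) ℂ))⁻¹
      = (((ρ⁻¹:ℝ)):ℂ) • (1 : Matrix (Fin N) (Fin N) ℂ) := by
    rw [smul_matrix_inv (by exact_mod_cast ne_of_gt hρ) (by simp)]
    rw [show ((1 : Matrix (Fin N) (Fin N) ℂ))⁻¹ = 1 from
      Matrix.inv_eq_left_inv (one_mul 1)]
    norm_cast
  rw [hinv1] at hinv
  have htr := re_nonneg_of_nonneg (trace_mul_posSemidef_nonneg (hR k) hinv)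
  rw [Matrix.mul_sub, Matrix.trace_sub, Complex.sub_re, mul_smul_comm, mul_one,
    Matrix.trace_smul, smul_eq_mul, Complex.re_ofReal_mul] at htr
  have h2 : ((R k * (Amat ρ S R δ)⁻¹).trace).re ≤ ρ⁻¹ * ((R k).trace).re := by linarith
  unfold Fmap
  calc (1 / (N : ℝ)) * ((R k * (Amat ρ S R δ)⁻¹).trace).re
      ≤ (1 / (N : ℝ)) * (ρ⁻¹ * ((R k).trace).re) :=
        mul_le_mul_of_nonneg_left h2 (by positivity)
    _ = (1 / (N:ℝ)) * ρ⁻¹ * ((R k).trace).re := by ring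

lemma Fmap_scale (hN : 0 < N) (hρ : 0 < ρ) (hS : S.PosSemidef) (hR : ∀ k, (R k).PosSemidef)
    {δ : Fin K → ℝ} (hδ : ∀ k, 0 ≤ δ k) {t : ℝ} (ht : 1 < t) {k : Fin K} (hk : R k ≠ 0) :
    Fmap ρ S R (fun j => t * δ j) k < t * Fmap ρ S R δ k := by
  have ht0 : (0:ℝ) < t := lt_trans one_pos ht
  have hA := Amat_posDef hρ hS hR hδ
  have hAt := Amat_posDef hρ hS hR (δ := fun j => t * δ j)
    (fun j => mul_nonneg ht0.le (hδ j))
  have hsm : ((((1/t:ℝ)):ℂ) • Amat ρ S R δ).PosDef := smul_posDef (by positivity) hA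
  have hpd := Amat_scale hρ hS hR hδ ht
  have hinvd := inv_sub_inv_posDef hsm hAt hpd
  have hAdet : IsUnit (Amat ρ S R δ).det := isUnit_iff_ne_zero.mpr (ne_of_gt hA.det_pos)
  have hrw : ((((1/t:ℝ)):ℂ) • Amat ρ S R δ)⁻¹ = (((t:ℝ)):ℂ) • (Amat ρ S R δ)⁻¹ := by
    rw [smul_matrix_inv (by
      simp only [ne_eq, Complex.ofReal_eq_zero]
      positivity) hAdet]
    norm_num
  rw [hrw] at hinvd
  have htr := trace_mul_posDef_pos (hR k) hk hinvd
  rw [Matrix.mul_sub, Matrix.trace_sub, Complex.sub_re, mul_smul_comm,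
    Matrix.trace_smul, smul_eq_mul, Complex.re_ofReal_mul] at htr
  have hN' : (0:ℝ) < 1 / (N:ℝ) := by positivity
  unfold Fmap
  nlinarith [htr, hN']

lemma exists_fixed (hN : 0 < N) (hρ : 0 < ρ) (hS : S.PosSemidef)
    (hR : ∀ k, (R k).PosSemidef) :
    ∃ δ : Fin K → ℝ, (∀ k, 0 ≤ δ k) ∧ ∀ k, δ k = Fmap ρ S R δ k := by
  classical
  set M : ℝ := ∑ k : Fin K, (1/(N:ℝ)) * ρ⁻¹ * ((R k).trace).re with hM
  have htr_nonneg : ∀ k : Fin K, 0 ≤ ((R k).trace).re :=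
    fun k => re_nonneg_of_nonneg (trace_nonneg_of_posSemidef (hR k))
  have hterm : ∀ k : Fin K, 0 ≤ (1/(N:ℝ)) * ρ⁻¹ * ((R k).trace).re := by
    intro k
    have h1 := htr_nonneg k
    positivity
  have hM0 : 0 ≤ M := Finset.sum_nonneg fun k _ => hterm k
  have hbound : ∀ (δ : Fin K → ℝ), (∀ k, 0 ≤ δ k) → ∀ k, Fmap ρ S R δ k ≤ M := by
    intro δ hδ k
    exact (Fmap_bound hρ hS hR hδ k).trans
      (Finset.single_le_sum (fun i _ => hterm i) (Finset.mem_univ k))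
  haveI : Fact ((0:ℝ) ≤ M) := ⟨hM0⟩
  let g : (Fin K → Set.Icc (0:ℝ) M) →o (Fin K → Set.Icc (0:ℝ) M) :=
    ⟨fun x k => ⟨Fmap ρ S R (fun j => (x j : ℝ)) k,
      Fmap_nonneg hρ hS hR (fun j => (x j).2.1) k,
      hbound _ (fun j => (x j).2.1) k⟩, by
      intro x y hxy k
      exact Subtype.mk_le_mk.mpr
        (Fmap_mono hρ hS hR (fun j => (x j).2.1) (fun j => Subtype.coe_le_coe.mpr (hxy j)) k)⟩
  have hfix := g.map_lfp
  refine ⟨fun k => (g.lfp k : ℝ), fun k => (g.lfp k).2.1, fun k => ?_⟩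
  have := congrArg Subtype.val (congrFun hfix k)
  exact this.symm

lemma fixed_le (hN : 0 < N) (hρ : 0 < ρ) (hS : S.PosSemidef)
    (hR : ∀ k, (R k).PosSemidef) {δ δ' : Fin K → ℝ}
    (hδ : ∀ k, 0 ≤ δ k) (hfix : ∀ k, δ k = Fmap ρ S R δ k)
    (hδ' : ∀ k, 0 ≤ δ' k) (hfix' : ∀ k, δ' k = Fmap ρ S R δ' k) :
    ∀ k, δ' k ≤ δ k := by
  classical
  by_contra hcon
  push_neg at hcon
  obtain ⟨k0, hk0⟩ := hcon
  have hRk0 : R k0 ≠ 0 := by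
    intro h0
    have : δ' k0 = 0 := by rw [hfix' k0, Fmap_zero h0]
    have := hδ k0
    linarith
  set s : Finset (Fin K) := Finset.univ.filter (fun k => R k ≠ 0) with hsdef
  have hk0s : k0 ∈ s := by simp [hsdef, hRk0]
  have hsne : s.Nonempty := ⟨k0, hk0s⟩
  have hpos : ∀ k ∈ s, 0 < δ k := by
    intro k hk
    rw [hfix k]
    exact Fmap_pos hN hρ hS hR hδ (by simpa [hsdef] using hk)
  set t : ℝ := s.sup' hsne (fun k => δ' k / δ k) with htdef
  have ht1 : 1 < t := by
    have h1 : (1:ℝ) < δ' k0 / δ k0 := (one_lt_div (hpos k0 hk0s)).mpr hk0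
    have h2 : δ' k0 / δ k0 ≤ t := by rw [htdef]; exact Finset.le_sup' (fun k => δ' k / δ k) hk0s
    linarith
  have ht0 : (0:ℝ) < t := lt_trans one_pos ht1
  have hle : ∀ k, δ' k ≤ t * δ k := by
    intro k
    by_cases hk : R k = 0
    · have hz : δ' k = 0 := by rw [hfix' k, Fmap_zero hk]
      rw [hz]
      exact mul_nonneg ht0.le (hδ k)
    · have hks : k ∈ s := by simp [hsdef, hk]
      have h1 : δ' k / δ k ≤ t := by rw [htdef]; exact Finset.le_sup' (fun k => δ' k / δ k) hks
      rw [div_le_iff₀ (hpos k hks)] at h1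
      linarith
  obtain ⟨k1, hk1s, hk1⟩ := Finset.exists_mem_eq_sup' hsne (fun k => δ' k / δ k)
  have hδk1 : 0 < δ k1 := hpos k1 hk1s
  have heq : δ' k1 = t * δ k1 := by
    rw [htdef, hk1, div_mul_cancel₀ _ (ne_of_gt hδk1)]
  have hchain : δ' k1 < δ' k1 := by
    calc δ' k1 = Fmap ρ S R δ' k1 := hfix' k1
      _ ≤ Fmap ρ S R (fun j => t * δ j) k1 := Fmap_mono hρ hS hR hδ' hle k1
      _ < t * Fmap ρ S R δ k1 :=
        Fmap_scale hN hρ hS hR hδ ht1 (by simpa [hsdef] using hk1s)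
      _ = t * δ k1 := by rw [← hfix k1]
      _ = δ' k1 := heq.symm
  exact absurd hchain (lt_irrefl _)

end main

/-- Existence and uniqueness of the nonnegative solution of the
fixed-point system `δ_k = (1/N) tr(R_k T(δ))`, where
`T(δ) = ((1/N)Σ_j R_j/(1+δ_j) + S + ρI_N)⁻¹`, for Hermitian PSD `S, R_1, …, R_K`
and `ρ > 0`. -/
theorem stmt9
    (N K : ℕ) (hN : 0 < N) (hK : 0 < K) (ρ : ℝ) (hρ : 0 < ρ)
    (S : Matrix (Fin N) (Fin N) ℂ) (hS : S.PosSemidef)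
    (R : Fin K → Matrix (Fin N) (Fin N) ℂ) (hR : ∀ k, (R k).PosSemidef)
    (T : (Fin K → ℝ) → Matrix (Fin N) (Fin N) ℂ)
    (hT : ∀ δ : Fin K → ℝ, T δ =
      ((1 / (N : ℂ)) • (∑ j : Fin K, ((1 : ℂ) + (δ j : ℂ))⁻¹ • R j) + S
        + (ρ : ℂ) • (1 : Matrix (Fin N) (Fin N) ℂ))⁻¹) :
    ∃! δ : Fin K → ℝ, (∀ k, 0 ≤ δ k) ∧
      ∀ k, δ k = (1 / (N : ℝ)) * (Matrix.trace (R k * T δ)).re := by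
  have hTA : ∀ δ : Fin K → ℝ, T δ = (Amat ρ S R δ)⁻¹ := fun δ => by rw [hT δ]; rfl
  have hFeq : ∀ (δ : Fin K → ℝ) (k : Fin K),
      Fmap ρ S R δ k = (1 / (N : ℝ)) * (Matrix.trace (R k * T δ)).re := by
    intro δ k
    rw [hTA δ]
    rfl
  obtain ⟨δ0, hδ0, hfix0⟩ := exists_fixed hN hρ hS hR
  refine ⟨δ0, ⟨hδ0, fun k => by rw [hfix0 k]; exact hFeq δ0 k⟩, ?_⟩
  rintro y ⟨hy0, hyfix⟩
  have hyfix' : ∀ k, y k = Fmap ρ S R y k := fun k => by rw [hyfix k, ← hFeq]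
  funext k
  exact le_antisymm (fixed_le hN hρ hS hR hδ0 hfix0 hy0 hyfix' k)
    (fixed_le hN hρ hS hR hy0 hyfix' hδ0 hfix0 k)
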